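/- Let P be a 4-regular map on a finite dart set H encoded by (α, σ), where α is a fixed-point-free involution and every cycle of σ has length 4. Define ρ = σ²α (so ρ(h) = α(σ²(h)) with the right-action convention). Then ρ commutes with the straight-ahead dynamics in the following sense: each orbit of the group generated by α and σ² (a 'straight-ahead component' of darts) is a union of exactly two cycles of ρ; consequently, the number of cycles of ρ is even, and the number of straight-ahead components equals (1/2)·(number of cycles of ρ). -/

import Mathlib

section Aux

variable {H : Type*} {α σ : Equiv.Perm H}

private lemma sa_conj (hinv : α * α = 1) (h4 : σ ^ 4 = 1) :
    ∀ k : ℤ, α * (α * σ ^ 2) ^ k = (α * σ ^ 2) ^ (-k) * α := by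
  have hαinv : α⁻¹ = α := by
    rw [inv_eq_iff_mul_eq_one]; exact hinv
  have hτinv : (σ ^ 2)⁻¹ = σ ^ 2 := by
    rw [inv_eq_iff_mul_eq_one, ← pow_add]; exact h4
  set ρ := α * σ ^ 2 with hρ
  have hconj : α * ρ * α⁻¹ = ρ⁻¹ := by
    rw [hρ, mul_inv_rev, hαinv, hτinv]
    calc α * (α * σ ^ 2) * α = (α * α) * (σ ^ 2 * α) := by group
    _ = σ ^ 2 * α := by rw [hinv, one_mul]
  intro k
  have h1 : α * ρ ^ k * α⁻¹ = (α * ρ * α⁻¹) ^ k := by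
    have := map_zpow (MulAut.conj α) ρ k
    simpa [MulAut.conj_apply] using this
  have h2 : α * ρ ^ k * α⁻¹ = ρ ^ (-k) := by
    rw [h1, hconj, inv_zpow, zpow_neg]
  calc α * ρ ^ k = (α * ρ ^ k * α⁻¹) * α := by group
  _ = ρ ^ (-k) * α := by rw [h2]

private lemma sa_key_ne (hinv : α * α = 1) (hfpf : ∀ h, α h ≠ h)
    (h4 : σ ^ 4 = 1) (h2 : ∀ h, (σ ^ 2) h ≠ h) (x : H) (k : ℤ) :
    α x ≠ ((α * σ ^ 2) ^ k) x := by
  set ρ := α * σ ^ 2 with hρ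
  intro hk
  have hcomm := sa_conj hinv h4
  -- α (ρ^j x) = ρ^(k-j) x for all j
  have key : ∀ j : ℤ, α ((ρ ^ j) x) = (ρ ^ (k - j)) x := by
    intro j
    have : (α * ρ ^ j) x = (ρ ^ (-j) * α) x := by rw [hcomm j]
    simp only [Equiv.Perm.mul_apply] at this
    rw [this, hk, ← Equiv.Perm.mul_apply, ← zpow_add]
    ring_nf
  rcases Int.even_or_odd k with ⟨m, hm⟩ | ⟨m, hm⟩
  · -- k = 2m : α fixes ρ^m x
    have : α ((ρ ^ m) x) = (ρ ^ m) x := by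
      rw [key m, hm]; ring_nf
    exact hfpf _ this
  · -- k = 2m+1 : σ² fixes ρ^m x
    have hτ : (σ ^ 2 : Equiv.Perm H) = α * ρ := by
      rw [hρ, ← mul_assoc, hinv, one_mul]
    have : (σ ^ 2) ((ρ ^ m) x) = (ρ ^ m) x := by
      rw [hτ, Equiv.Perm.mul_apply]
      have : ρ ((ρ ^ m) x) = (ρ ^ (m + 1)) x := by
        rw [← Equiv.Perm.mul_apply, ← zpow_one_add]; ring_nf
      rw [this, key (m + 1), hm]
      ring_nf
    exact h2 _ this

private lemma sa_form (hinv : α * α = 1) (h4 : σ ^ 4 = 1) {g : Equiv.Perm H}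
    (hg : g ∈ Subgroup.closure ({α, σ ^ 2} : Set (Equiv.Perm H))) :
    ∃ k : ℤ, g = (α * σ ^ 2) ^ k ∨ g = α * (α * σ ^ 2) ^ k := by
  set ρ := α * σ ^ 2 with hρ
  have hcomm := sa_conj hinv h4
  have hcomm' : ∀ k : ℤ, ρ ^ k * α = α * ρ ^ (-k) := by
    intro k; rw [hcomm (-k), neg_neg]
  induction hg using Subgroup.closure_induction with
  | mem x hx =>
    rcases hx with rfl | hx
    · exact ⟨0, Or.inr (by rw [zpow_zero, mul_one])⟩
    · rcases hx with rfl
      exact ⟨1, Or.inr (by rw [zpow_one, hρ, ← mul_assoc, hinv, one_mul])⟩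
  | one => exact ⟨0, Or.inl (zpow_zero ρ).symm⟩
  | mul x y hx hy ihx ihy =>
    obtain ⟨k, hk | hk⟩ := ihx <;> obtain ⟨l, hl | hl⟩ := ihy
    · exact ⟨k + l, Or.inl (by rw [hk, hl, zpow_add])⟩
    · refine ⟨l - k, Or.inr ?_⟩
      rw [hk, hl, ← mul_assoc, hcomm' k, mul_assoc, ← zpow_add]
      ring_nf
    · exact ⟨k + l, Or.inr (by rw [hk, hl, mul_assoc, ← zpow_add])⟩
    · refine ⟨l - k, Or.inl ?_⟩
      rw [hk, hl, mul_assoc, ← mul_assoc (ρ ^ k), hcomm' k, ← mul_assoc,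
        ← mul_assoc, hinv, one_mul, ← zpow_add]
      ring_nf
  | inv x hx ihx =>
    obtain ⟨k, hk | hk⟩ := ihx
    · exact ⟨-k, Or.inl (by rw [hk, ← zpow_neg])⟩
    · refine ⟨k, Or.inr ?_⟩
      have hαinv : α⁻¹ = α := by rw [inv_eq_iff_mul_eq_one]; exact hinv
      rw [hk, mul_inv_rev, hαinv, ← zpow_neg, hcomm' (-k), neg_neg]

end Aux

/-- Straight-ahead components of a 4-regular map.  With `ρ = σ²α`
(`ρ h = α (σ² h)`, i.e. `α * σ^2` in Lean's convention), the natural map from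
`ρ`-cycles to `⟨α, σ²⟩`-orbits (straight-ahead components) is 2-to-1, so the
number of straight-ahead components is half the number of cycles of `ρ`. -/
theorem stmt_4 {H : Type*} [Fintype H] (α σ : Equiv.Perm H)
    (hinv : α * α = 1) (hfpf : ∀ h, α h ≠ h)
    (h4 : σ ^ 4 = 1) (h2 : ∀ h, (σ ^ 2) h ≠ h) :
    ∃ f : MulAction.orbitRel.Quotient (Subgroup.zpowers (α * σ ^ 2)) H →
        MulAction.orbitRel.Quotient
          (Subgroup.closure ({α, σ ^ 2} : Set (Equiv.Perm H))) H,
      (∀ x : H, f (Quotient.mk _ x) = Quotient.mk _ x) ∧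
      (∀ c, Nat.card {d // f d = c} = 2) ∧
      Nat.card (MulAction.orbitRel.Quotient (Subgroup.zpowers (α * σ ^ 2)) H) =
        2 * Nat.card (MulAction.orbitRel.Quotient
          (Subgroup.closure ({α, σ ^ 2} : Set (Equiv.Perm H))) H) := by
  classical
  set ρ := α * σ ^ 2 with hρ
  set G := Subgroup.closure ({α, σ ^ 2} : Set (Equiv.Perm H)) with hG
  have hαG : α ∈ G := Subgroup.subset_closure (Set.mem_insert _ _)
  have hτG : σ ^ 2 ∈ G :=
    Subgroup.subset_closure (Set.mem_insert_of_mem _ rfl)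
  have hρG : ρ ∈ G := mul_mem hαG hτG
  have hle : Subgroup.zpowers ρ ≤ G := Subgroup.zpowers_le.mpr hρG
  -- the map on quotients
  let f : MulAction.orbitRel.Quotient (Subgroup.zpowers ρ) H →
      MulAction.orbitRel.Quotient G H :=
    Quotient.map' id (fun x y hxy => by
      obtain ⟨g, hg⟩ := hxy
      exact ⟨⟨(g : Equiv.Perm H), hle g.2⟩, hg⟩)
  have hf : ∀ x : H, f (Quotient.mk'' x) = Quotient.mk'' x := fun _ => rfl
  -- distinctness of the two ρ-cycles in each component
  have hne : ∀ x : H,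
      (Quotient.mk'' x : MulAction.orbitRel.Quotient (Subgroup.zpowers ρ) H) ≠
        Quotient.mk'' (α x) := by
    intro x heq
    obtain ⟨⟨g, k, hk⟩, hg⟩ := Quotient.eq''.mp heq
    simp only at hk
    subst hk
    have hg' : (ρ ^ k) (α x) = x := hg
    have h3 : α x = (ρ ^ (-k)) x := by
      have h5 := congrArg (⇑(ρ ^ (-k))) hg'
      rw [← Equiv.Perm.mul_apply, ← zpow_add] at h5
      simpa using h5
    exact sa_key_ne hinv hfpf h4 h2 x (-k) h3
  -- fiber description
  have hfiber : ∀ (x : H) (d), f d = Quotient.mk'' x ↔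
      d = Quotient.mk'' x ∨ d = Quotient.mk'' (α x) := by
    intro x d
    induction d using Quotient.inductionOn' with
    | h y =>
      constructor
      · intro hy
        rw [hf y] at hy
        obtain ⟨⟨g, hgG⟩, hg⟩ := Quotient.eq''.mp hy
        obtain ⟨k, rfl | rfl⟩ := sa_form hinv h4 hgG
        · refine Or.inl (Quotient.sound' ?_)
          exact ⟨⟨ρ ^ k, zpow_mem (Subgroup.mem_zpowers ρ) k⟩, hg⟩
        · refine Or.inr (Quotient.sound' ?_)
          refine ⟨⟨ρ ^ (-k), zpow_mem (Subgroup.mem_zpowers ρ) (-k)⟩, ?_⟩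
          have : (α * ρ ^ k) x = (ρ ^ (-k)) (α x) := by
            rw [sa_conj hinv h4 k, Equiv.Perm.mul_apply]
          rw [← hg]
          exact this.symm
      · rintro (h | h)
        · exact (congrArg f h).trans (hf x)
        · exact (congrArg f h).trans ((hf (α x)).trans
            (Quotient.sound' ⟨⟨α, hαG⟩, rfl⟩))
  -- fiber cardinality
  have hcard : ∀ c, Nat.card {d // f d = c} = 2 := by
    intro c
    have hx : Quotient.mk'' (Quotient.out c) = c := Quotient.out_eq' c
    have hset : {d | f d = c} =
        ({Quotient.mk'' (Quotient.out c),
          Quotient.mk'' (α (Quotient.out c))} :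
          Set (MulAction.orbitRel.Quotient (Subgroup.zpowers ρ) H)) := by
      ext d
      rw [Set.mem_insert_iff, Set.mem_singleton_iff]
      exact (hx ▸ hfiber (Quotient.out c) d :
        f d = c ↔ _)
    have h1 : Nat.card {d // f d = c} = ({d | f d = c} :
        Set (MulAction.orbitRel.Quotient (Subgroup.zpowers ρ) H)).ncard :=
      Nat.card_coe_set_eq _
    rw [h1, hset, Set.ncard_pair (hne (Quotient.out c))]
  refine ⟨f, fun x => rfl, hcard, ?_⟩
  -- total count
  letI : Fintype (MulAction.orbitRel.Quotient G H) := Fintype.ofFinite _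
  letI : Fintype (MulAction.orbitRel.Quotient (Subgroup.zpowers ρ) H) :=
    Fintype.ofFinite _
  letI : ∀ c, Fintype {d // f d = c} := fun c => Fintype.ofFinite _
  have e := Equiv.sigmaFiberEquiv f
  have hcard' : ∀ c, Fintype.card {d // f d = c} = 2 := fun c => by
    rw [← Nat.card_eq_fintype_card]; exact hcard c
  rw [Nat.card_eq_fintype_card, Nat.card_eq_fintype_card,
    ← Fintype.card_congr e, Fintype.card_sigma]
  simp [hcard', Finset.sum_const, mul_comm]
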